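/- Suppose the potential q is even on [0,a], i.e. q(a−x) = q(x) for all x ∈ [0,a]. Then for every λ ∈ ℂ, C'(a) = 2·C(a/2)·C'(a/2). -/

import Mathlib

open Set


/-- Magnus–Winkler identity for even potentials: if `q` is even on `[0,a]`,
then `C\'(a) = 2 C(a/2) C\'(a/2)`. -/
theorem even_potential_Cd_half_identity
    (a : ℝ) (ha : 0 < a) (q : ℝ → ℝ) (hq : ContinuousOn q (Set.Icc 0 a))
    (hqeven : ∀ x ∈ Set.Icc 0 a, q (a - x) = q x)
    (lam : ℂ) (C S Cd Sd : ℝ → ℂ)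
    (hC : ∀ x ∈ Set.Icc 0 a, HasDerivWithinAt C (Cd x) (Set.Icc 0 a) x)
    (hC' : ∀ x ∈ Set.Icc 0 a,
      HasDerivWithinAt Cd ((q x : ℂ) * C x - lam * C x) (Set.Icc 0 a) x)
    (hS : ∀ x ∈ Set.Icc 0 a, HasDerivWithinAt S (Sd x) (Set.Icc 0 a) x)
    (hS' : ∀ x ∈ Set.Icc 0 a,
      HasDerivWithinAt Sd ((q x : ℂ) * S x - lam * S x) (Set.Icc 0 a) x)
    (hC0 : C 0 = 1) (hCd0 : Cd 0 = 0) (hS0 : S 0 = 0) (hSd0 : Sd 0 = 1) :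
    Cd a = 2 * C (a / 2) * Cd (a / 2) := by
  have hmem : ∀ x ∈ Icc (0:ℝ) a, a - x ∈ Icc (0:ℝ) a := by
    rintro x ⟨h1, h2⟩; exact ⟨by linarith, by linarith⟩
  set F : ℝ → ℂ := fun x => C (a - x) * Cd x + Cd (a - x) * C x with hF
  have hFd : ∀ x ∈ Icc (0:ℝ) a, HasDerivWithinAt F 0 (Icc 0 a) x := by
    intro x hx
    have hsub : HasDerivWithinAt (fun y : ℝ => a - y) (-1) (Icc 0 a) x := by
      simpa using (hasDerivWithinAt_id x (Icc (0:ℝ) a)).const_sub a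
    have h1 := HasDerivWithinAt.scomp_of_eq x (hC _ (hmem x hx)) hsub
      (fun y hy => hmem y hy) rfl
    have h2 := HasDerivWithinAt.scomp_of_eq x (hC' _ (hmem x hx)) hsub
      (fun y hy => hmem y hy) rfl
    simp only [Function.comp_def, neg_smul, one_smul] at h1 h2
    have h := (h1.mul (hC' x hx)).add (h2.mul (hC x hx))
    have hqe : (q (a - x) : ℂ) = (q x : ℂ) := by exact_mod_cast congrArg Complex.ofReal (hqeven x hx)
    exact h.congr_deriv (by rw [hqe]; ring)
  have hcont : ContinuousOn F (Icc 0 a) := fun x hx => (hFd x hx).continuousWithinAt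
  have key : ∀ x ∈ Icc (0:ℝ) a, F x = F 0 :=
    constant_of_has_deriv_right_zero hcont (fun x hx =>
      (hFd x (Ico_subset_Icc_self hx)).mono_of_mem_nhdsWithin (Icc_mem_nhdsGE_of_mem hx))
  have h0 : F 0 = Cd a := by simp [hF, hC0, hCd0]
  have hh : F (a / 2) = 2 * C (a / 2) * Cd (a / 2) := by
    have : a - a / 2 = a / 2 := by ring
    simp [hF, this]; ring
  have := key (a / 2) ⟨by linarith, by linarith⟩
  rw [hh, h0] at this
  exact this.symm
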